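/- (Dimension extension rule.) Let (𝒞, 𝒟, g, z, T, ε) be an (F, f)-valid configuration in dimension n. Define 𝒞' = {C × ℝ : C ∈ 𝒞}, 𝒟' = {C × ℝ : C ∈ 𝒟}, g' : ℝ^{n+1} → ℝ by g'(x_1,…,x_{n+1}) = g(x_1,…,x_n), and T' = (V, E, B', σ) with B'_v = B_v × ℝ for all v ∈ V. Then (𝒞', 𝒟', g', z, T', ε) is an (F, f)-valid configuration (with F, f regarded via the embedding that ignores the last coordinate, i.e. conditions (V2) and (V3) refer to the original F ⊆ ℝ^n and f : ℝ^n → ℝ). -/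

import Mathlib

open Set

/-- Apply a signed index list (index, sign) to a point, giving the vector
`(sign(i₁)·x_{|i₁|}, …, sign(i_k)·x_{|i_k|})` as a list of reals.
`true` encodes a positive sign, `false` a negative sign. -/
def sigApply {n : ℕ} (σ : List (Fin n × Bool)) (x : Fin n → ℝ) : List ℝ :=
  σ.map (fun p => if p.2 then x p.1 else -(x p.1))

/-- Strict ε-lexicographic order `x ≻_ε y` on lists of reals:
`x ≠ y` and, at the first index where they differ, `x i ≥ y i + ε`. -/
def lexGt (ε : ℝ) : List ℝ → List ℝ → Prop
  | a :: as, b :: bs => (a = b ∧ lexGt ε as bs) ∨ (a ≠ b ∧ b + ε ≤ a)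
  | _, _ => False

/-- A branching tree `T = (V, E, B, σ)`: a finite arborescence (encoded by a
parent map from which every node reaches the root), a branching constraint
`B v ⊆ ℝⁿ` for every node with `B r = ℝⁿ`, and a list `σ v` of signed variable
indices with pairwise distinct absolute values for every node. -/
structure BranchingTree (n : ℕ) where
  V : Type
  fin : Fintype V
  root : V
  parent : V → Option V
  parent_root : parent root = none
  parent_isSome : ∀ v, v ≠ root → (parent v).isSome
  reach_root : ∀ v, Relation.ReflTransGen (fun a b => parent a = some b) v root
  B : V → Set (Fin n → ℝ)
  B_root : B root = Set.univ
  sig : V → List (Fin n × Bool)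
  sig_nodup : ∀ v, ((sig v).map Prod.fst).Nodup

namespace BranchingTree

variable {n : ℕ} (T : BranchingTree n)

/-- The set of children `δ⁺(u)` of a node. -/
def children (u : T.V) : Set T.V := {v | T.parent v = some u}

/-- A leaf is a node without children. -/
def IsLeaf (v : T.V) : Prop := T.children v = ∅

/-- The nodes on the root-to-`v` path (the ancestors of `v`, including `v`). -/
def pathNodes (v : T.V) : Set T.V :=
  {u | Relation.ReflTransGen (fun a b => T.parent a = some b) v u}

/-- `ℬ_v`: the branching constraints attached to the nodes on the root-to-`v` path. -/
def pathCons (v : T.V) : Set (Set (Fin n → ℝ)) := T.B '' T.pathNodes v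

/-- Depth of a node: the number of nodes on its root path. -/
noncomputable def depth (v : T.V) : ℕ := (T.pathNodes v).ncard

/-- The feasible region `⋂(𝒞 ∪ ℬ_v)` of node `v`. -/
def region (𝒞 : Set (Set (Fin n → ℝ))) (v : T.V) : Set (Fin n → ℝ) :=
  ⋂₀ (𝒞 ∪ T.pathCons v)

/-- `T` is `𝒞`-consistent: (T3) the children of any non-leaf cover `⋂𝒞`;
(T5) `σ u` is a prefix of `σ v` for every child `v` of `u`;
(T6) every entry of `σ v (x)` is bounded above over `x ∈ ⋂𝒞`;
(T7) distinct children of `u` have `σ u`-disjoint branching constraints. -/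
def Consistent (𝒞 : Set (Set (Fin n → ℝ))) : Prop :=
  (∀ u : T.V, (T.children u).Nonempty → ⋂₀ 𝒞 ⊆ ⋃ v ∈ T.children u, T.B v) ∧
  (∀ u v : T.V, v ∈ T.children u → T.sig u <+: T.sig v) ∧
  (∀ v : T.V, ∀ i : Fin (T.sig v).length,
    BddAbove ((fun x => if ((T.sig v).get i).2 then x ((T.sig v).get i).1
      else -(x ((T.sig v).get i).1)) '' ⋂₀ 𝒞)) ∧
  (∀ u v w : T.V, v ∈ T.children u → w ∈ T.children u → v ≠ w →
    sigApply (T.sig u) '' T.B v ∩ sigApply (T.sig u) '' T.B w = ∅)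

/-- `v` is a deepest common node `dcn(x,y)`: both `x` and `y` lie in the
feasible region of `v`, and `v` is deepest with this property. -/
def IsDCN (𝒞 : Set (Set (Fin n → ℝ))) (v : T.V) (x y : Fin n → ℝ) : Prop :=
  x ∈ T.region 𝒞 v ∧ y ∈ T.region 𝒞 v ∧
  ∀ w : T.V, x ∈ T.region 𝒞 w → y ∈ T.region 𝒞 w → T.depth w ≤ T.depth v

/-- `x ⪰_T y` : with `v = dcn(x,y)`, `σ v (x) = σ v (y)` or `σ v (x) ≻_ε σ v (y)`. -/
def TreeGe (𝒞 : Set (Set (Fin n → ℝ))) (ε : ℝ) (x y : Fin n → ℝ) : Prop :=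
  ∃ v : T.V, T.IsDCN 𝒞 v x y ∧
    (sigApply (T.sig v) x = sigApply (T.sig v) y ∨
      lexGt ε (sigApply (T.sig v) x) (sigApply (T.sig v) y))

/-- `x ≻_{ε,T} y` : with `v = dcn(x,y)`, `σ v (x) ≻_ε σ v (y)`. -/
def TreeGt (𝒞 : Set (Set (Fin n → ℝ))) (ε : ℝ) (x y : Fin n → ℝ) : Prop :=
  ∃ v : T.V, T.IsDCN 𝒞 v x y ∧
    lexGt ε (sigApply (T.sig v) x) (sigApply (T.sig v) y)

end BranchingTree

/-- A configuration `(𝒞, 𝒟, g, z, T, ε)`. -/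
structure Config (n : ℕ) where
  core : Set (Set (Fin n → ℝ))
  derived : Set (Set (Fin n → ℝ))
  g : (Fin n → ℝ) → ℝ
  z : WithTop ℝ
  tree : BranchingTree n
  eps : ℝ

/-- `(F, f)`-validity of a configuration: (V1) the tree is core-consistent and
`ε > 0`; (V2) if `z < ∞` there is `x ∈ F` with `f x ≤ z`; (V3) for every real
`ẑ < z`, `F` contains a point of `f`-value `≤ ẑ` iff `⋂𝒞` contains a point of
`g`-value `≤ ẑ`; (V4) every `x ∈ ⋂𝒞` with `g x < z` is dominated by some
`y ∈ ⋂(𝒞 ∪ 𝒟)` with `y ⪰_T x` and `g y ≤ g x`. -/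
def Config.Valid {n : ℕ} (F : Set (Fin n → ℝ)) (f : (Fin n → ℝ) → ℝ)
    (K : Config n) : Prop :=
  (K.tree.Consistent K.core ∧ 0 < K.eps) ∧
  (K.z < ⊤ → ∃ x ∈ F, (f x : WithTop ℝ) ≤ K.z) ∧
  (∀ zh : ℝ, (zh : WithTop ℝ) < K.z →
    ((∃ x ∈ F, f x ≤ zh) ↔ ∃ x ∈ ⋂₀ K.core, K.g x ≤ zh)) ∧
  (∀ x ∈ ⋂₀ K.core, (K.g x : WithTop ℝ) < K.z →
    ∃ y ∈ ⋂₀ (K.core ∪ K.derived), K.tree.TreeGe K.core K.eps y x ∧ K.g y ≤ K.g x)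

/-- The implication constraint `[𝒜 ⇝ C] = (ℝⁿ \ ⋂𝒜) ∪ C`. -/
def implCon {n : ℕ} (𝒜 : Set (Set (Fin n → ℝ))) (C : Set (Fin n → ℝ)) :
    Set (Fin n → ℝ) := (⋂₀ 𝒜)ᶜ ∪ C

/-- The cylinder `C × ℝ ⊆ ℝ^{n+1}` over a constraint `C ⊆ ℝⁿ`. -/
def extendSet {n : ℕ} (C : Set (Fin n → ℝ)) : Set (Fin (n + 1) → ℝ) :=
  {x | (fun i : Fin n => x i.castSucc) ∈ C}

/-- The branching tree in dimension `n + 1` obtained from `T` by replacing each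
branching constraint `B v` by `B v × ℝ` (the node set, edges and signed index
lists are unchanged, the indices being reinterpreted in dimension `n + 1`). -/
def extendTree {n : ℕ} (T : BranchingTree n) : BranchingTree (n + 1) where
  V := T.V
  fin := T.fin
  root := T.root
  parent := T.parent
  parent_root := T.parent_root
  parent_isSome := T.parent_isSome
  reach_root := T.reach_root
  B := fun v => extendSet (T.B v)
  B_root := by
    ext x
    simp [extendSet, T.B_root]
  sig := fun v => (T.sig v).map (fun p => (p.1.castSucc, p.2))
  sig_nodup := fun v => by
    have h : ((T.sig v).map (fun p : Fin n × Bool => ((p.1.castSucc, p.2) : Fin (n + 1) × Bool))).map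
        Prod.fst = ((T.sig v).map Prod.fst).map Fin.castSucc := by
      simp [List.map_map]
    rw [h]
    exact (T.sig_nodup v).map (Fin.castSucc_injective n)

/-- The configuration `(𝒞', 𝒟', g', z, T', ε)` in dimension `n + 1` obtained by
introducing one new variable: `𝒞' = {C × ℝ : C ∈ 𝒞}`, `𝒟' = {C × ℝ : C ∈ 𝒟}`,
`g'(x₁,…,x_{n+1}) = g(x₁,…,x_n)`, and `T'` has `B' v = B v × ℝ`. -/
noncomputable def extendConfig {n : ℕ} (K : Config n) : Config (n + 1) where
  core := extendSet '' K.core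
  derived := extendSet '' K.derived
  g := fun x => K.g (fun i : Fin n => x i.castSucc)
  z := K.z
  tree := extendTree K.tree
  eps := K.eps

section Aux

variable {n : ℕ}

/-- Projection dropping the last coordinate. -/
def projFun (x : Fin (n + 1) → ℝ) : Fin n → ℝ := fun i => x i.castSucc

lemma mem_sInter_extend (A : Set (Set (Fin n → ℝ))) (x : Fin (n + 1) → ℝ) :
    x ∈ ⋂₀ (extendSet '' A) ↔ projFun x ∈ ⋂₀ A := by
  constructor
  · intro h C hC
    exact h _ ⟨C, hC, rfl⟩
  · rintro h _ ⟨C, hC, rfl⟩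
    exact h C hC

lemma projFun_snoc (y : Fin n → ℝ) (c : ℝ) : projFun (Fin.snoc y c) = y := by
  funext i; simp [projFun, Fin.snoc_castSucc]

lemma sigApply_extend (T : BranchingTree n) (v : T.V) (x : Fin (n + 1) → ℝ) :
    sigApply ((extendTree T).sig v) x = sigApply (T.sig v) (projFun x) := by
  simp [sigApply, extendTree, List.map_map, projFun, Function.comp]

lemma pathNodes_extend (T : BranchingTree n) (v : T.V) :
    (extendTree T).pathNodes v = T.pathNodes v := rfl

lemma pathCons_extend (T : BranchingTree n) (v : T.V) :
    (extendTree T).pathCons v = extendSet '' T.pathCons v := by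
  unfold BranchingTree.pathCons
  rw [pathNodes_extend, ← Set.image_comp]
  rfl

lemma region_extend (T : BranchingTree n) (𝒞 : Set (Set (Fin n → ℝ))) (v : T.V)
    (x : Fin (n + 1) → ℝ) :
    x ∈ (extendTree T).region (extendSet '' 𝒞) v ↔ projFun x ∈ T.region 𝒞 v := by
  unfold BranchingTree.region
  rw [pathCons_extend, ← Set.image_union, mem_sInter_extend]

lemma depth_extend (T : BranchingTree n) (v : T.V) :
    (extendTree T).depth v = T.depth v := rfl

lemma isDCN_extend (T : BranchingTree n) (𝒞 : Set (Set (Fin n → ℝ))) (v : T.V)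
    (x y : Fin (n + 1) → ℝ) :
    (extendTree T).IsDCN (extendSet '' 𝒞) v x y ↔
      T.IsDCN 𝒞 v (projFun x) (projFun y) := by
  unfold BranchingTree.IsDCN
  rw [region_extend, region_extend]
  constructor
  · rintro ⟨h1, h2, h3⟩
    exact ⟨h1, h2, fun w hx hy =>
      h3 w ((region_extend T 𝒞 w x).mpr hx) ((region_extend T 𝒞 w y).mpr hy)⟩
  · rintro ⟨h1, h2, h3⟩
    exact ⟨h1, h2, fun w hx hy =>
      h3 w ((region_extend T 𝒞 w x).mp hx) ((region_extend T 𝒞 w y).mp hy)⟩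

end Aux

/-- dimension extension rule: if `(𝒞, 𝒟, g, z, T, ε)` is
`(F, f)`-valid in dimension `n`, then the extended configuration
`(𝒞', 𝒟', g', z, T', ε)` in dimension `n + 1` satisfies all four validity
conditions, where (V2) and (V3) refer to the original `F ⊆ ℝⁿ` and
`f : ℝⁿ → ℝ`. -/
theorem dimension_extension {n : ℕ} (F : Set (Fin n → ℝ))
    (f : (Fin n → ℝ) → ℝ) (K : Config n) (hV : K.Valid F f) :
    ((extendConfig K).tree.Consistent (extendConfig K).core ∧
      0 < (extendConfig K).eps) ∧
    ((extendConfig K).z < ⊤ → ∃ x ∈ F, (f x : WithTop ℝ) ≤ (extendConfig K).z) ∧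
    (∀ zh : ℝ, (zh : WithTop ℝ) < (extendConfig K).z →
      ((∃ x ∈ F, f x ≤ zh) ↔
        ∃ x ∈ ⋂₀ (extendConfig K).core, (extendConfig K).g x ≤ zh)) ∧
    (∀ x ∈ ⋂₀ (extendConfig K).core,
      ((extendConfig K).g x : WithTop ℝ) < (extendConfig K).z →
      ∃ y ∈ ⋂₀ ((extendConfig K).core ∪ (extendConfig K).derived),
        (extendConfig K).tree.TreeGe (extendConfig K).core (extendConfig K).eps y x ∧
        (extendConfig K).g y ≤ (extendConfig K).g x) := by
  obtain ⟨⟨⟨hT3, hT5, hT6, hT7⟩, heps⟩, hV2, hV3, hV4⟩ := hV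
  refine ⟨⟨⟨?_, ?_, ?_, ?_⟩, heps⟩, hV2, ?_, ?_⟩
  · -- T3
    intro u hu x hx
    have hx' : projFun x ∈ ⋂₀ K.core := (mem_sInter_extend K.core x).mp hx
    have := hT3 u hu hx'
    simp only [Set.mem_iUnion] at this ⊢
    obtain ⟨v, hv, hmem⟩ := this
    exact ⟨v, hv, hmem⟩
  · -- T5
    intro u v hv
    exact (hT5 u v hv).map _
  · -- T6
    intro v i
    obtain ⟨M, hM⟩ := hT6 v (Fin.cast (by simp [extendConfig, extendTree]) i)
    refine ⟨M, ?_⟩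
    rintro r ⟨x, hx, rfl⟩
    have hx' : projFun x ∈ ⋂₀ K.core := (mem_sInter_extend K.core x).mp hx
    have := hM ⟨projFun x, hx', rfl⟩
    simp only [List.get_eq_getElem] at this ⊢
    simp [extendConfig, extendTree, List.get_eq_getElem, List.getElem_map, projFun] at this ⊢
    exact this
  · -- T7
    intro u v w hv hw hvw
    have key : ∀ z : K.tree.V,
        sigApply ((extendTree K.tree).sig u) '' (extendTree K.tree).B z ⊆
          sigApply (K.tree.sig u) '' K.tree.B z := by
      rintro z _ ⟨x, hx, rfl⟩
      exact ⟨projFun x, hx, (sigApply_extend K.tree u x).symm⟩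
    have := hT7 u v w hv hw hvw
    apply Set.eq_empty_of_subset_empty
    calc _ ⊆ sigApply (K.tree.sig u) '' K.tree.B v ∩ sigApply (K.tree.sig u) '' K.tree.B w :=
          Set.inter_subset_inter (key v) (key w)
      _ = ∅ := this
  · -- V3
    intro zh hzh
    rw [hV3 zh hzh]
    constructor
    · rintro ⟨x, hx, hgx⟩
      exact ⟨Fin.snoc x 0, (mem_sInter_extend K.core _).mpr (by rwa [projFun_snoc]),
        by show K.g (projFun (Fin.snoc x 0)) ≤ zh; rwa [projFun_snoc]⟩
    · rintro ⟨x, hx, hgx⟩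
      exact ⟨projFun x, (mem_sInter_extend K.core x).mp hx, hgx⟩
  · -- V4
    intro x hx hgx
    have hx' : projFun x ∈ ⋂₀ K.core := (mem_sInter_extend K.core x).mp hx
    obtain ⟨y, hy, ⟨v, hdcn, hge⟩, hgy⟩ := hV4 (projFun x) hx' hgx
    refine ⟨Fin.snoc y 0, ?_, ⟨v, ?_, ?_⟩, ?_⟩
    · show _ ∈ ⋂₀ (extendSet '' K.core ∪ extendSet '' K.derived)
      rw [← Set.image_union, mem_sInter_extend, projFun_snoc]
      exact hy
    · show (extendTree K.tree).IsDCN (extendSet '' K.core) v (Fin.snoc y 0) x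
      rw [isDCN_extend, projFun_snoc]
      exact hdcn
    · show sigApply ((extendTree K.tree).sig v) (Fin.snoc y 0) =
          sigApply ((extendTree K.tree).sig v) x ∨
          lexGt K.eps (sigApply ((extendTree K.tree).sig v) (Fin.snoc y 0))
            (sigApply ((extendTree K.tree).sig v) x)
      rw [sigApply_extend, sigApply_extend, projFun_snoc]
      exact hge
    · show K.g (projFun (Fin.snoc y 0)) ≤ K.g (projFun x)
      rwa [projFun_snoc]
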